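/- ζ(3) = ζ(1,2), i.e., Σ_{n=1}^∞ 1/n^3 = Σ_{0<m<n} 1/(m·n^2) (sum over all pairs of positive integers m < n). -/

import Mathlib

open Finset ENNReal Filter


noncomputable def Hn (m : ℕ) : ℝ := ∑ i ∈ Finset.range m, 1/((i:ℝ)+1)

lemma Hn_nonneg (m : ℕ) : 0 ≤ Hn m := Finset.sum_nonneg (fun i _ => by positivity)

lemma Hn_succ (m : ℕ) : Hn (m+1) = Hn m + 1/((m:ℝ)+1) := Finset.sum_range_succ _ m

lemma sum3 : Summable (fun n : ℕ => 1/((n:ℝ)+1)^3) := by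
  have := (summable_nat_add_iff 1).2 (Real.summable_one_div_nat_pow.2 (by norm_num : 2 ≤ 3))
  refine this.congr fun n => ?_
  push_cast; ring

lemma sum2 : Summable (fun n : ℕ => 1/((n:ℝ)+1)^2) := by
  have := (summable_nat_add_iff 1).2 (Real.summable_one_div_nat_pow.2 (le_refl 2))
  refine this.congr fun n => ?_
  push_cast; ring

lemma sum32 : Summable (fun n : ℕ => 1/(((n:ℝ)+1) * Real.sqrt ((n:ℝ)+1))) := by
  have h := (summable_nat_add_iff 1).2 (Real.summable_one_div_nat_rpow.2 (by norm_num : (1:ℝ) < 3/2))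
  refine h.congr fun n => ?_
  have h1 : (0:ℝ) < (n:ℝ)+1 := by positivity
  push_cast
  rw [Real.sqrt_eq_rpow]
  rw [show (3/2 : ℝ) = 1 + 1/2 by norm_num, Real.rpow_add h1, Real.rpow_one]

lemma tele (m : ℕ) :
    HasSum (fun k : ℕ => 1/((k:ℝ)+1) - 1/((k:ℝ)+1+(m:ℝ))) (Hn m) := by
  set f : ℕ → ℝ := fun k => 1/((k:ℝ)+1) - 1/((k:ℝ)+1+(m:ℝ)) with hf
  have hfdef : ∀ k : ℕ, f k = 1/((k:ℝ)+1) - 1/((k:ℝ)+1+(m:ℝ)) := fun k => rfl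
  have key : ∀ k : ℕ, f k = (m:ℝ)/(((k:ℝ)+1)*((k:ℝ)+1+(m:ℝ))) := by
    intro k
    have hk1 : (0:ℝ) < (k:ℝ)+1 := by positivity
    have hk2 : (0:ℝ) < (k:ℝ)+1+(m:ℝ) := by positivity
    rw [hfdef]; field_simp; ring
  have hnn : ∀ k, 0 ≤ f k := by
    intro k; rw [key k]; positivity
  have hsumm : Summable f := by
    have hb : Summable (fun k : ℕ => (m:ℝ) * (1/((k:ℝ)+1)^2)) := sum2.mul_left _
    refine Summable.of_nonneg_of_le hnn (fun k => ?_) hb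
    rw [key k, mul_one_div]
    apply div_le_div_of_nonneg_left (by positivity) (by positivity)
    nlinarith [Nat.cast_nonneg (α := ℝ) m, Nat.cast_nonneg (α := ℝ) k]
  have hpart : ∀ K : ℕ, ∑ k ∈ range K, f k = Hn m - ∑ i ∈ range m, 1/((K:ℝ)+(i:ℝ)+1) := by
    intro K
    induction K with
    | zero => simp [Hn]
    | succ K ih =>
      set g : ℕ → ℝ := fun i => 1/((K:ℝ)+(i:ℝ)+1) with hg
      have hgdef : ∀ i : ℕ, g i = 1/((K:ℝ)+(i:ℝ)+1) := fun i => rfl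
      have htel : ∑ i ∈ range m, g i - ∑ i ∈ range m, g (i+1) = g 0 - g m := by
        rw [← Finset.sum_sub_distrib]; exact Finset.sum_range_sub' g m
      have hfK : f K = g 0 - g m := by
        rw [hfdef K, hgdef 0, hgdef m]; push_cast; ring
      have h2 : ∑ i ∈ range m, (1:ℝ)/((((K+1:ℕ)):ℝ)+(i:ℝ)+1) = ∑ i ∈ range m, g (i+1) :=
        Finset.sum_congr rfl fun i _ => by rw [hgdef (i+1)]; push_cast; ring
      rw [Finset.sum_range_succ, ih, hfK, h2]
      linarith [htel]
  have h0 : Tendsto (fun K : ℕ => ∑ i ∈ range m, 1/((K:ℝ)+(i:ℝ)+1)) atTop (nhds 0) := by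
    have h0i : ∀ i ∈ range m, Tendsto (fun K : ℕ => 1/((K:ℝ)+(i:ℝ)+1)) atTop (nhds 0) := by
      intro i _
      apply squeeze_zero (fun K => by positivity) (fun K => ?_) tendsto_one_div_add_atTop_nhds_zero_nat
      apply one_div_le_one_div_of_le (by positivity)
      have : (0:ℝ) ≤ (i:ℝ) := Nat.cast_nonneg i
      linarith
    have := tendsto_finset_sum (range m) h0i
    simpa using this
  have hlim : Tendsto (fun K : ℕ => ∑ k ∈ range K, f k) atTop (nhds (Hn m)) := by
    have := Tendsto.sub (tendsto_const_nhds (x := Hn m) (f := atTop)) h0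
    rw [sub_zero] at this
    exact Tendsto.congr (fun K => (hpart K).symm) this
  have heq := tendsto_nhds_unique hsumm.hasSum.tendsto_sum_nat hlim
  rw [← heq]; exact hsumm.hasSum

noncomputable def hw (n : ℕ) : ℝ := 1/(((n:ℝ)+1) * Real.sqrt ((n:ℝ)+1))

lemma hw_summable : Summable hw := sum32

lemma hw_nonneg : ∀ n, 0 ≤ hw n := fun n => by unfold hw; positivity

lemma rhs_summable :
    Summable (fun p : {p : ℕ × ℕ // 0 < p.1 ∧ p.1 < p.2} =>
      (1:ℝ)/((p.val.1:ℝ) * (p.val.2:ℝ)^2)) := by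
  have hprod : Summable (fun x : ℕ × ℕ => hw x.1 * hw x.2) :=
    Summable.mul_of_nonneg hw_summable hw_summable hw_nonneg hw_nonneg
  have hinj : Function.Injective
      (fun p : {p : ℕ × ℕ // 0 < p.1 ∧ p.1 < p.2} => ((p.val.1 - 1, p.val.2 - 1) : ℕ × ℕ)) := by
    rintro ⟨⟨a,b⟩,ha⟩ ⟨⟨c,d⟩,hc⟩ heq
    simp only [Prod.mk.injEq] at heq
    apply Subtype.ext
    simp only [Prod.mk.injEq]
    omega
  have hcomp := hprod.comp_injective hinj
  apply Summable.of_nonneg_of_le (fun p => by positivity) (fun p => ?_) hcomp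
  obtain ⟨⟨a,b⟩, h1, h2⟩ := p
  simp only [Function.comp_apply, hw]
  have hA : ((a - 1 : ℕ):ℝ) + 1 = (a:ℝ) := by
    have : (1:ℕ) ≤ a := h1
    push_cast [Nat.cast_sub this]; ring
  have hB : ((b - 1 : ℕ):ℝ) + 1 = (b:ℝ) := by
    have : (1:ℕ) ≤ b := by omega
    push_cast [Nat.cast_sub this]; ring
  rw [hA, hB]
  have hA1 : (1:ℝ) ≤ (a:ℝ) := by exact_mod_cast h1
  have hAB : (a:ℝ) ≤ (b:ℝ) := by exact_mod_cast h2.le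
  have hB1 : (1:ℝ) ≤ (b:ℝ) := le_trans hA1 hAB
  have hsA : Real.sqrt (a:ℝ) ≤ Real.sqrt (b:ℝ) := Real.sqrt_le_sqrt hAB
  have hsB : Real.sqrt (b:ℝ) * Real.sqrt (b:ℝ) = (b:ℝ) := Real.mul_self_sqrt (by linarith)
  have hsA1 : (1:ℝ) ≤ Real.sqrt (a:ℝ) := by
    rw [show (1:ℝ) = Real.sqrt 1 by simp]; exact Real.sqrt_le_sqrt hA1
  rw [div_mul_div_comm, one_mul]
  apply one_div_le_one_div_of_le
  · positivity
  · calc (a:ℝ) * Real.sqrt a * ((b:ℝ) * Real.sqrt b)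
        ≤ (a:ℝ) * Real.sqrt b * ((b:ℝ) * Real.sqrt b) := by
          have h0 : (0:ℝ) ≤ Real.sqrt (b:ℝ) := Real.sqrt_nonneg _
          gcongr
      _ = (a:ℝ) * (b:ℝ) ^ 2 := by
          rw [show (a:ℝ) * Real.sqrt b * ((b:ℝ) * Real.sqrt b)
              = (a:ℝ) * (b:ℝ) * (Real.sqrt (b:ℝ) * Real.sqrt (b:ℝ)) by ring, hsB]
          ring


def e1 : ℕ × ℕ ≃ {p : ℕ × ℕ // 0 < p.1 ∧ p.1 < p.2} where
  toFun x := ⟨(x.1+1, x.1+x.2+2), by omega⟩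
  invFun p := (p.val.1 - 1, p.val.2 - p.val.1 - 1)
  left_inv x := by obtain ⟨a,b⟩ := x; simp only [Prod.mk.injEq]; omega
  right_inv p := by
    obtain ⟨⟨a,b⟩,h⟩ := p; apply Subtype.ext; simp only [Prod.mk.injEq]
    obtain ⟨h1,h2⟩ := h; omega
def e2 : (Σ a : ℕ, Fin a) ≃ {p : ℕ × ℕ // 0 < p.1 ∧ p.1 < p.2} where
  toFun σ := ⟨((σ.2:ℕ)+1, σ.1+1), ⟨Nat.succ_pos _, Nat.succ_lt_succ σ.2.isLt⟩⟩
  invFun p := ⟨p.val.2 - 1, ⟨p.val.1 - 1, by have := p.prop; omega⟩⟩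
  left_inv σ := by obtain ⟨a, i⟩ := σ; rfl
  right_inv p := by
    obtain ⟨⟨a,b⟩,h⟩ := p; apply Subtype.ext; simp only [Prod.mk.injEq]
    obtain ⟨h1,h2⟩ := h; omega

noncomputable def ZE : ℝ≥0∞ :=
  ∑' p : {p : ℕ × ℕ // 0 < p.1 ∧ p.1 < p.2},
    ENNReal.ofReal ((1:ℝ)/((p.val.1:ℝ) * (p.val.2:ℝ)^2))
noncomputable def AE : ℝ≥0∞ := ∑' n : ℕ, ENNReal.ofReal ((1:ℝ)/((n:ℝ)+1)^3)

lemma hZ1 : ZE = ∑' x : ℕ × ℕ,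
    ENNReal.ofReal (1/(((x.1:ℝ)+1) * ((x.1:ℝ)+(x.2:ℝ)+2)^2)) := by
  rw [ZE, ← e1.tsum_eq]
  apply tsum_congr; intro x
  obtain ⟨a,b⟩ := x
  simp only [e1, Equiv.coe_fn_mk]
  congr 1
  push_cast
  ring

lemma hZ2 : ZE = ∑' x : ℕ × ℕ,
    ENNReal.ofReal (1/(((x.2:ℝ)+1) * ((x.1:ℝ)+(x.2:ℝ)+2)^2)) := by
  rw [hZ1, ← (Equiv.prodComm ℕ ℕ).tsum_eq]
  apply tsum_congr; intro x
  obtain ⟨a,b⟩ := x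
  simp only [Equiv.prodComm_apply, Prod.swap_prod_mk]
  congr 1
  ring

lemma hT : (∑' x : ℕ × ℕ,
      ENNReal.ofReal (1/(((x.1:ℝ)+1)*((x.2:ℝ)+1)*((x.1:ℝ)+(x.2:ℝ)+2)))) = ZE + ZE := by
  have hpt : ∀ x : ℕ × ℕ,
      ENNReal.ofReal (1/(((x.1:ℝ)+1)*((x.2:ℝ)+1)*((x.1:ℝ)+(x.2:ℝ)+2)))
      = ENNReal.ofReal (1/(((x.1:ℝ)+1) * ((x.1:ℝ)+(x.2:ℝ)+2)^2))
      + ENNReal.ofReal (1/(((x.2:ℝ)+1) * ((x.1:ℝ)+(x.2:ℝ)+2)^2)) := by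
    rintro ⟨a,b⟩
    rw [← ENNReal.ofReal_add (by positivity) (by positivity)]
    congr 1
    have h1 : (0:ℝ) < (a:ℝ)+1 := by positivity
    have h2 : (0:ℝ) < (b:ℝ)+1 := by positivity
    have h3 : (0:ℝ) < (a:ℝ)+(b:ℝ)+2 := by positivity
    field_simp
    ring
  rw [tsum_congr hpt, ENNReal.tsum_add, ← hZ1, ← hZ2]

lemma hTA : (∑' x : ℕ × ℕ,
      ENNReal.ofReal (1/(((x.1:ℝ)+1)*((x.2:ℝ)+1)*((x.1:ℝ)+(x.2:ℝ)+2))))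
    = (∑' a : ℕ, ENNReal.ofReal (1/((a:ℝ)+1)^2 * Hn a)) + AE := by
  rw [ENNReal.tsum_prod']
  have inner : ∀ a : ℕ,
      (∑' b : ℕ, ENNReal.ofReal (1/(((a:ℝ)+1)*((b:ℝ)+1)*((a:ℝ)+(b:ℝ)+2))))
      = ENNReal.ofReal (1/((a:ℝ)+1)^2 * Hn a) + ENNReal.ofReal ((1:ℝ)/((a:ℝ)+1)^3) := by
    intro a
    have hs : HasSum (fun b : ℕ => 1/((a:ℝ)+1)^2 * (1/((b:ℝ)+1) - 1/((b:ℝ)+1+((a+1:ℕ):ℝ))))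
        (1/((a:ℝ)+1)^2 * Hn (a+1)) := (tele (a+1)).mul_left _
    have hpt : ∀ b : ℕ, (1:ℝ)/(((a:ℝ)+1)*((b:ℝ)+1)*((a:ℝ)+(b:ℝ)+2))
        = 1/((a:ℝ)+1)^2 * (1/((b:ℝ)+1) - 1/((b:ℝ)+1+((a+1:ℕ):ℝ))) := by
      intro b
      have h1 : (0:ℝ) < (a:ℝ)+1 := by positivity
      have h2 : (0:ℝ) < (b:ℝ)+1 := by positivity
      have h3 : (0:ℝ) < (a:ℝ)+(b:ℝ)+2 := by positivity
      push_cast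
      field_simp
      ring
    have hnn : ∀ b : ℕ, 0 ≤ 1/((a:ℝ)+1)^2 * (1/((b:ℝ)+1) - 1/((b:ℝ)+1+((a+1:ℕ):ℝ))) := by
      intro b
      rw [← hpt b]
      positivity
    calc (∑' b : ℕ, ENNReal.ofReal (1/(((a:ℝ)+1)*((b:ℝ)+1)*((a:ℝ)+(b:ℝ)+2))))
        = ∑' b : ℕ, ENNReal.ofReal (1/((a:ℝ)+1)^2 * (1/((b:ℝ)+1) - 1/((b:ℝ)+1+((a+1:ℕ):ℝ)))) :=
          tsum_congr (fun b => by rw [hpt b])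
      _ = ENNReal.ofReal (∑' b : ℕ, 1/((a:ℝ)+1)^2 * (1/((b:ℝ)+1) - 1/((b:ℝ)+1+((a+1:ℕ):ℝ)))) :=
          (ENNReal.ofReal_tsum_of_nonneg hnn hs.summable).symm
      _ = ENNReal.ofReal (1/((a:ℝ)+1)^2 * Hn (a+1)) := by rw [hs.tsum_eq]
      _ = ENNReal.ofReal (1/((a:ℝ)+1)^2 * Hn a + (1:ℝ)/((a:ℝ)+1)^3) := by
          rw [Hn_succ]
          congr 1
          have h1 : ((a:ℝ)+1) ≠ 0 := by positivity
          field_simp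
      _ = ENNReal.ofReal (1/((a:ℝ)+1)^2 * Hn a) + ENNReal.ofReal ((1:ℝ)/((a:ℝ)+1)^3) := by
          rw [ENNReal.ofReal_add (mul_nonneg (by positivity) (Hn_nonneg a)) (by positivity)]
  rw [tsum_congr inner, ENNReal.tsum_add, AE]

lemma hZ2Z : (∑' a : ℕ, ENNReal.ofReal (1/((a:ℝ)+1)^2 * Hn a)) = ZE := by
  have h1 : ∀ a : ℕ, ENNReal.ofReal (1/((a:ℝ)+1)^2 * Hn a)
      = ∑' i : Fin a, ENNReal.ofReal (1/(((i:ℕ):ℝ)+1) * (1/((a:ℝ)+1)^2)) := by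
    intro a
    rw [tsum_fintype, ← Finset.sum_range (fun i => ENNReal.ofReal (1/((i:ℝ)+1) * (1/((a:ℝ)+1)^2))),
      ← ENNReal.ofReal_sum_of_nonneg (fun i _ => by positivity)]
    congr 1
    rw [Hn, Finset.mul_sum]
    exact Finset.sum_congr rfl (fun i _ => by ring)
  rw [tsum_congr h1, ← ENNReal.tsum_sigma, ZE, ← e2.tsum_eq]
  apply tsum_congr; intro σ
  obtain ⟨a,i⟩ := σ
  simp only [e2, Equiv.coe_fn_mk]
  congr 1
  push_cast
  rw [div_mul_div_comm, one_mul]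

lemma keyEq : ZE = AE := by
  have h := hT.symm.trans (hTA.trans (by rw [hZ2Z]))
  have hZne : ZE ≠ ⊤ := by
    rw [ZE, ← ENNReal.ofReal_tsum_of_nonneg (fun p => by positivity) rhs_summable]
    exact ENNReal.ofReal_ne_top
  exact (ENNReal.add_right_inj hZne).1 h

theorem stmt_8 :
    ∑' n : ℕ, (1 : ℝ) / ((n : ℝ) + 1) ^ 3 =
    ∑' p : {p : ℕ × ℕ // 0 < p.1 ∧ p.1 < p.2},
      (1 : ℝ) / ((p.val.1 : ℝ) * (p.val.2 : ℝ) ^ 2) := by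
  have hA : ENNReal.ofReal (∑' n : ℕ, (1:ℝ)/((n:ℝ)+1)^3) = AE := by
    rw [ENNReal.ofReal_tsum_of_nonneg (fun n => by positivity) sum3, AE]
  have hZ : ENNReal.ofReal (∑' p : {p : ℕ × ℕ // 0 < p.1 ∧ p.1 < p.2},
      (1:ℝ)/((p.val.1:ℝ) * (p.val.2:ℝ)^2)) = ZE := by
    rw [ENNReal.ofReal_tsum_of_nonneg (fun p => by positivity) rhs_summable, ZE]
  have heq : ENNReal.ofReal (∑' n : ℕ, (1:ℝ)/((n:ℝ)+1)^3)
      = ENNReal.ofReal (∑' p : {p : ℕ × ℕ // 0 < p.1 ∧ p.1 < p.2},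
        (1:ℝ)/((p.val.1:ℝ) * (p.val.2:ℝ)^2)) := by
    rw [hA, hZ, keyEq]
  exact (ENNReal.ofReal_eq_ofReal_iff
    (tsum_nonneg (fun n => by positivity)) (tsum_nonneg (fun p => by positivity))).1 heq
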